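/- arXiv:2112.12225 — 2 statements merged into one kernel-verified Lean document; each statement's English description precedes it below -/
import Mathlib

section
/- Let p ∈ (1,2], δ > 0 and A ≥ 1, and set ω := ω_{p,δ}. Then for all t ≥ 0: ((p−1)/2)·(δ+A)^{p−2}·t² ≤ ω^A(t), and (p−1)·ω(t) ≤ ω^A(t) ≤ (δ^{p−2}/2)·t². -/
open Real Set MeasureTheory Filter Matrix

noncomputable section

/-- The N-function `omega_{p,delta}(t) = int_0^t (delta+s)^(p-2) s ds`. -/
def omg (p δ : ℝ) (t : ℝ) : ℝ := ∫ s in (0:ℝ)..t, (δ + s) ^ (p - 2) * s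

/-- The `A`-approximation of a function `φ`: it equals `φ` on `[0,A]` and is the
second-order Taylor polynomial of `φ` at `A` for `t > A`. -/
def approxA (φ : ℝ → ℝ) (A : ℝ) (t : ℝ) : ℝ :=
  if t ≤ A then φ t
  else (1/2) * deriv (deriv φ) A * t ^ 2 + (deriv φ A - deriv (deriv φ) A * A) * t
    + (φ A - deriv φ A * A + (1/2) * deriv (deriv φ) A * A ^ 2)

/-- `φ` is a regular N-function: continuous, convex, positive for `t > 0`,
`φ(t)/t → 0` as `t → 0⁺`, `φ(t)/t → ∞` as `t → ∞`, `C¹` on `[0,∞)`, `C²` on `(0,∞)`,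
with `φ'' > 0` on `(0,∞)`. -/
structure IsRegularNFunction (φ : ℝ → ℝ) : Prop where
  continuousOn : ContinuousOn φ (Set.Ici 0)
  convexOn : ConvexOn ℝ (Set.Ici 0) φ
  pos : ∀ t : ℝ, 0 < t → 0 < φ t
  tendsto_zero : Filter.Tendsto (fun t => φ t / t) (nhdsWithin 0 (Set.Ioi 0)) (nhds 0)
  tendsto_atTop : Filter.Tendsto (fun t => φ t / t) Filter.atTop Filter.atTop
  diffAt : ∀ t : ℝ, 0 < t → DifferentiableAt ℝ φ t
  deriv_continuousOn : ContinuousOn (deriv φ) (Set.Ici 0)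
  diffAt2 : ∀ t : ℝ, 0 < t → DifferentiableAt ℝ (deriv φ) t
  deriv2_continuousOn : ContinuousOn (deriv (deriv φ)) (Set.Ioi 0)
  deriv2_pos : ∀ t : ℝ, 0 < t → 0 < deriv (deriv φ) t

/-- `φ` is a balanced N-function with characteristics `(γ₁, γ₂)`:
`γ₁ φ'(t) ≤ t φ''(t) ≤ γ₂ φ'(t)` for all `t > 0`. -/
structure IsBalanced (φ : ℝ → ℝ) (γ₁ γ₂ : ℝ) : Prop where
  regular : IsRegularNFunction φ
  gamma1_mem : γ₁ ∈ Set.Ioc (0:ℝ) 1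
  gamma2_ge : 1 ≤ γ₂
  lower : ∀ t : ℝ, 0 < t → γ₁ * deriv φ t ≤ t * deriv (deriv φ) t
  upper : ∀ t : ℝ, 0 < t → t * deriv (deriv φ) t ≤ γ₂ * deriv φ t

/-- `ψ` satisfies the Δ₂-condition with constant `K`. -/
def SatisfiesDelta2 (ψ : ℝ → ℝ) (K : ℝ) : Prop :=
  2 ≤ K ∧ ∀ t : ℝ, 0 ≤ t → ψ (2 * t) ≤ K * ψ t

/-- The complementary N-function `φ*(t) = ∫₀ᵗ (φ')⁻¹(s) ds`, where `(φ')⁻¹` is the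
inverse on `[0,∞)` of the (strictly increasing) derivative `φ'`. -/
def conj (φ : ℝ → ℝ) (t : ℝ) : ℝ :=
  ∫ s in (0:ℝ)..t, Function.invFunOn (deriv φ) (Set.Ici 0) s

lemma fcont {p δ : ℝ} (hδ : 0 < δ) :
    ContinuousOn (fun s : ℝ => (δ + s) ^ (p - 2) * s) (Set.Ioi (-δ)) := by
  apply ContinuousOn.mul _ continuousOn_id
  apply ContinuousOn.rpow_const (by fun_prop)
  intro x hx
  simp only [Set.mem_Ioi] at hx
  exact Or.inl (ne_of_gt (by linarith))

lemma fint {p δ : ℝ} (hδ : 0 < δ) {a b : ℝ} (ha : -δ < a) (hb : -δ < b) :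
    IntervalIntegrable (fun s : ℝ => (δ + s) ^ (p - 2) * s) MeasureTheory.volume a b := by
  apply ((fcont hδ).mono ?_).intervalIntegrable
  intro x hx
  exact (lt_inf_iff.mpr ⟨ha, hb⟩).trans_le hx.1

lemma int_bounds {p δ : ℝ} (hδ : 0 < δ) (hp2 : p ≤ 2) {a b : ℝ} (ha : 0 ≤ a) (hab : a ≤ b) :
    (δ + b) ^ (p - 2) * (b ^ 2 - a ^ 2) / 2 ≤ (∫ s in a..b, (δ + s) ^ (p - 2) * s) ∧
    (∫ s in a..b, (δ + s) ^ (p - 2) * s) ≤ (δ + a) ^ (p - 2) * (b ^ 2 - a ^ 2) / 2 := by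
  have hb : 0 ≤ b := ha.trans hab
  have ha' : -δ < a := by linarith
  have hb' : -δ < b := by linarith
  have key : ∀ c : ℝ, (∫ s in a..b, c * s) = c * (b ^ 2 - a ^ 2) / 2 := by
    intro c
    rw [intervalIntegral.integral_const_mul, integral_id]
    ring
  have hci : ∀ c : ℝ, IntervalIntegrable (fun s : ℝ => c * s) MeasureTheory.volume a b :=
    fun c => (continuous_const.mul continuous_id).intervalIntegrable a b
  constructor
  · rw [← key ((δ + b) ^ (p - 2))]
    apply intervalIntegral.integral_mono_on hab (hci _) (fint hδ ha' hb')
    intro x hx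
    have hx0 : 0 ≤ x := ha.trans hx.1
    have : (δ + b) ^ (p - 2) ≤ (δ + x) ^ (p - 2) :=
      Real.rpow_le_rpow_of_nonpos (by linarith) (by linarith [hx.2]) (by linarith)
    exact mul_le_mul_of_nonneg_right this hx0
  · rw [← key ((δ + a) ^ (p - 2))]
    apply intervalIntegral.integral_mono_on hab (fint hδ ha' hb') (hci _)
    intro x hx
    have hx0 : 0 ≤ x := ha.trans hx.1
    have : (δ + x) ^ (p - 2) ≤ (δ + a) ^ (p - 2) :=
      Real.rpow_le_rpow_of_nonpos (by linarith) (by linarith [hx.1]) (by linarith)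
    exact mul_le_mul_of_nonneg_right this hx0

lemma omg_hasDerivAt {p δ : ℝ} (hδ : 0 < δ) {t : ℝ} (ht : -δ < t) :
    HasDerivAt (omg p δ) ((δ + t) ^ (p - 2) * t) t := by
  apply intervalIntegral.integral_hasDerivAt_right (fint hδ (by linarith) ht)
  · exact (fcont hδ).stronglyMeasurableAtFilter isOpen_Ioi t ht
  · exact (fcont hδ).continuousAt (isOpen_Ioi.mem_nhds ht)

lemma omg_deriv2 {p δ A : ℝ} (hδ : 0 < δ) (hA : 0 < A) :
    deriv (deriv (omg p δ)) A = (p - 2) * (δ + A) ^ (p - 3) * A + (δ + A) ^ (p - 2) := by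
  have hdA : (0:ℝ) < δ + A := by linarith
  have heq : deriv (omg p δ) =ᶠ[nhds A] fun s => (δ + s) ^ (p - 2) * s := by
    filter_upwards [isOpen_Ioi.mem_nhds (show A ∈ Set.Ioi (-δ) by simp only [Set.mem_Ioi]; linarith)]
      with x hx
    exact (omg_hasDerivAt hδ hx).deriv
  rw [heq.deriv_eq]
  have h1 : HasDerivAt (fun s : ℝ => δ + s) 1 A := by
    simpa using (hasDerivAt_id A).const_add δ
  have h2 := (Real.hasDerivAt_rpow_const (x := δ + A) (p := p - 2)
    (Or.inl hdA.ne')).comp A h1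
  have h3 := h2.mul (hasDerivAt_id A)
  have h4 : HasDerivAt (fun s : ℝ => (δ + s) ^ (p - 2) * s)
      ((p - 2) * (δ + A) ^ (p - 3) * A + (δ + A) ^ (p - 2)) A := by
    simpa [Function.comp, Function.comp_def, Pi.mul_def, show p - 2 - 1 = p - 3 by ring] using h3
  exact h4.deriv

set_option maxHeartbeats 1000000 in
/-- For `p ∈ (1,2]`, `δ > 0`, `A ≥ 1` and all `t ≥ 0`:
`((p−1)/2)(δ+A)^{p−2} t² ≤ ω^A(t)` and `(p−1) ω(t) ≤ ω^A(t) ≤ (δ^{p−2}/2) t²`. -/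
theorem stmt6 (p δ A : ℝ) (hp : p ∈ Set.Ioc (1:ℝ) 2) (hδ : 0 < δ) (hA : 1 ≤ A) :
    ∀ t : ℝ, 0 ≤ t →
      ((p - 1) / 2) * (δ + A) ^ (p - 2) * t ^ 2 ≤ approxA (omg p δ) A t ∧
      (p - 1) * omg p δ t ≤ approxA (omg p δ) A t ∧
      approxA (omg p δ) A t ≤ (δ ^ (p - 2) / 2) * t ^ 2 := by
  obtain ⟨hp1, hp2⟩ := hp
  intro t ht
  have hA0 : (0:ℝ) < A := by linarith
  have hdA : (0:ℝ) < δ + A := by linarith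
  have hBpos : (0:ℝ) < (δ + A) ^ (p - 2) := Real.rpow_pos_of_pos hdA _
  have hDpos : (0:ℝ) < δ ^ (p - 2) := Real.rpow_pos_of_pos hδ _
  have hBD : (δ + A) ^ (p - 2) ≤ δ ^ (p - 2) :=
    Real.rpow_le_rpow_of_nonpos hδ (by linarith) (by linarith)
  by_cases h : t ≤ A
  · rw [approxA, if_pos h]
    have hdt : (0:ℝ) < δ + t := by linarith
    have hlo : (δ + t) ^ (p - 2) * (t ^ 2 - 0 ^ 2) / 2 ≤ omg p δ t :=
      (int_bounds hδ hp2 le_rfl ht).1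
    have hhi : omg p δ t ≤ (δ + 0) ^ (p - 2) * (t ^ 2 - 0 ^ 2) / 2 :=
      (int_bounds hδ hp2 le_rfl ht).2
    rw [add_zero] at hhi
    have hmono : (δ + A) ^ (p - 2) ≤ (δ + t) ^ (p - 2) :=
      Real.rpow_le_rpow_of_nonpos hdt (by linarith) (by linarith)
    have htpos : (0:ℝ) ≤ (δ + t) ^ (p - 2) := (Real.rpow_pos_of_pos hdt _).le
    refine ⟨?_, ?_, ?_⟩
    · nlinarith [mul_le_mul_of_nonneg_right hmono (sq_nonneg t),
        mul_nonneg hBpos.le (sq_nonneg t)]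
    · nlinarith [mul_nonneg htpos (sq_nonneg t)]
    · nlinarith
  · push_neg at h
    rw [approxA, if_neg (not_le.mpr h)]
    have hCpos : (0:ℝ) < (δ + A) ^ (p - 3) := Real.rpow_pos_of_pos hdA _
    have hBC : (δ + A) ^ (p - 2) = (δ + A) ^ (p - 3) * (δ + A) := by
      rw [show p - 2 = (p - 3) + 1 by ring, Real.rpow_add hdA, Real.rpow_one]
    have hW1 : deriv (omg p δ) A = (δ + A) ^ (p - 2) * A :=
      (omg_hasDerivAt hδ (by linarith)).deriv
    have hW2 := omg_deriv2 (p := p) hδ hA0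
    have hWlo : (δ + A) ^ (p - 2) * (A ^ 2 - 0 ^ 2) / 2 ≤ omg p δ A :=
      (int_bounds hδ hp2 le_rfl hA0.le).1
    have hWhi : omg p δ A ≤ (δ + 0) ^ (p - 2) * (A ^ 2 - 0 ^ 2) / 2 :=
      (int_bounds hδ hp2 le_rfl hA0.le).2
    rw [add_zero] at hWhi
    have hW0 : 0 ≤ omg p δ A := by nlinarith [mul_nonneg hBpos.le (sq_nonneg A)]
    have hW2lo : (p - 1) * (δ + A) ^ (p - 2) ≤ deriv (deriv (omg p δ)) A := by
      rw [hW2, hBC]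
      nlinarith [mul_nonneg (mul_nonneg hCpos.le (show (0:ℝ) ≤ 2 - p by linarith)) hδ.le]
    have hW2hi : deriv (deriv (omg p δ)) A ≤ (δ + A) ^ (p - 2) := by
      rw [hW2]
      nlinarith [mul_nonneg (mul_nonneg (show (0:ℝ) ≤ 2 - p by linarith) hCpos.le) hA0.le]
    have homg_t : omg p δ t = omg p δ A + ∫ s in A..t, (δ + s) ^ (p - 2) * s := by
      simp only [omg]
      exact (intervalIntegral.integral_add_adjacent_intervals
        (fint hδ (by linarith) (by linarith)) (fint hδ (by linarith) (by linarith))).symm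
    have hI : (∫ s in A..t, (δ + s) ^ (p - 2) * s) ≤ (δ + A) ^ (p - 2) * (t ^ 2 - A ^ 2) / 2 :=
      (int_bounds hδ hp2 hA0.le h.le).2
    have htA : (0:ℝ) ≤ t - A := by linarith
    refine ⟨?_, ?_, ?_⟩
    · nlinarith [mul_le_mul_of_nonneg_right hW2lo (sq_nonneg (t - A)),
        mul_nonneg (mul_nonneg (show (0:ℝ) ≤ 2 - p by linarith) hBpos.le)
          (mul_nonneg hA0.le htA),
        mul_nonneg (mul_nonneg (show (0:ℝ) ≤ 2 - p by linarith) hBpos.le) (sq_nonneg A),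
        hWlo, hW1]
    · nlinarith [mul_le_mul_of_nonneg_right hW2lo (sq_nonneg (t - A)),
        mul_nonneg (mul_nonneg (show (0:ℝ) ≤ 2 - p by linarith) hBpos.le)
          (mul_nonneg hA0.le htA),
        mul_nonneg (show (0:ℝ) ≤ 2 - p by linarith) hW0,
        mul_le_mul_of_nonneg_left hI (show (0:ℝ) ≤ p - 1 by linarith),
        homg_t, hW1]
    · nlinarith [mul_le_mul_of_nonneg_right (hW2hi.trans hBD) (sq_nonneg (t - A)),
        mul_nonneg (mul_nonneg (show (0:ℝ) ≤ δ ^ (p - 2) - (δ + A) ^ (p - 2) by linarith)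
          hA0.le) htA,
        hWhi, hW1]

end
end

section
/- Let p ∈ (1,2], δ > 0 and A ≥ 1, set ω := ω_{p,δ}, and let M ∈ ℕ be such that (p−1)^{−1} ≤ 2^M. Then for all t ≥ 0 the complementary functions satisfy (ω^A)*(t) ≤ (p−1)·(Δ₂(ω*))^M·ω*(t), where Δ₂(ω*) is the Δ₂-constant of ω* (which is finite and depends only on p). -/
open Real Set MeasureTheory Filter Matrix

noncomputable section

/-! ### Auxiliary material for Statement 7 -/

/-- The integrand of `omg`, i.e. the derivative `ω'`. -/
def ff (p δ : ℝ) (s : ℝ) : ℝ := (δ + s) ^ (p - 2) * s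

/-- The derivative of `ff`, i.e. `ω''`. -/
def ff' (p δ : ℝ) (s : ℝ) : ℝ := (δ + s) ^ (p - 3) * (δ + (p - 1) * s)

/-- The derivative of the `A`-approximation of `omg`. -/
def ffB (p δ A : ℝ) (t : ℝ) : ℝ :=
  if t ≤ A then ff p δ t else ff' p δ A * (t - A) + ff p δ A

lemma contAt_ff {p δ : ℝ} {x : ℝ} (hx : δ + x ≠ 0) : ContinuousAt (ff p δ) x :=
  (((continuous_const.add continuous_id).continuousAt).rpow_const (Or.inl hx)).mul continuousAt_id

lemma contOn_ff {p δ : ℝ} : ContinuousOn (ff p δ) (Ioi (-δ)) := by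
  intro x hx
  exact (contAt_ff (by simp only [mem_Ioi] at hx; intro h; linarith)).continuousWithinAt

lemma hasDerivAt_ff {p δ : ℝ} {s : ℝ} (hs : -δ < s) :
    HasDerivAt (ff p δ) (ff' p δ s) s := by
  have h0 : (0:ℝ) < δ + s := by linarith
  have h1 : HasDerivAt (fun x : ℝ => δ + x) 1 s := by
    simpa using (hasDerivAt_id s).const_add δ
  have h2 : HasDerivAt (fun x : ℝ => (δ + x) ^ (p - 2))
      (1 * (p - 2) * (δ + s) ^ (p - 2 - 1)) s :=
    h1.rpow_const (Or.inl h0.ne')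
  have h3 := h2.mul (hasDerivAt_id s)
  have e2 : (δ + s) ^ (p - 2) = (δ + s) ^ (p - 3) * (δ + s) := by
    have := Real.rpow_add_one h0.ne' (p - 3)
    have e1 : p - 3 + 1 = p - 2 := by ring
    rw [e1] at this
    exact this
  have h3' : HasDerivAt (ff p δ)
      (1 * (p - 2) * (δ + s) ^ (p - 2 - 1) * id s + (δ + s) ^ (p - 2) * 1) s := h3
  convert h3' using 1
  have e1 : p - 2 - 1 = p - 3 := by ring
  rw [e1, e2, ff']
  simp only [id_eq]
  ring

lemma hasDerivAt_omg {p δ : ℝ} (hδ : 0 < δ) {t : ℝ} (ht : -δ < t) :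
    HasDerivAt (omg p δ) (ff p δ t) t := by
  have hsub : uIcc (0:ℝ) t ⊆ Ioi (-δ) := by
    intro x hx
    rw [Set.mem_uIcc] at hx
    simp only [mem_Ioi]
    rcases hx with ⟨h1, _⟩ | ⟨h1, _⟩ <;> linarith
  have hint : IntervalIntegrable (ff p δ) volume 0 t :=
    (contOn_ff.mono hsub).intervalIntegrable
  have hmeas : StronglyMeasurableAtFilter (ff p δ) (nhds t) volume :=
    contOn_ff.stronglyMeasurableAtFilter isOpen_Ioi t ht
  have hcont : ContinuousAt (ff p δ) t := contAt_ff (by intro h; linarith)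
  exact intervalIntegral.integral_hasDerivAt_right hint hmeas hcont

lemma deriv_omg {p δ : ℝ} (hδ : 0 < δ) {t : ℝ} (ht : -δ < t) :
    deriv (omg p δ) t = ff p δ t := (hasDerivAt_omg hδ ht).deriv

lemma deriv2_omg {p δ : ℝ} (hδ : 0 < δ) {t : ℝ} (ht : -δ < t) :
    deriv (deriv (omg p δ)) t = ff' p δ t := by
  have h : deriv (omg p δ) =ᶠ[nhds t] ff p δ :=
    Filter.eventuallyEq_of_mem (isOpen_Ioi.mem_nhds ht) (fun x hx => deriv_omg hδ hx)
  rw [h.deriv_eq]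
  exact (hasDerivAt_ff ht).deriv

lemma ff_zero (p δ : ℝ) : ff p δ 0 = 0 := by simp [ff]

lemma ff'_pos {p δ : ℝ} (hp : 1 < p) (hδ : 0 < δ) {s : ℝ} (hs : 0 ≤ s) :
    0 < ff' p δ s := by
  have h0 : (0:ℝ) < δ + s := by linarith
  have h1 : 0 < δ + (p - 1) * s := by nlinarith
  exact mul_pos (Real.rpow_pos_of_pos h0 _) h1

lemma ff_strictMonoOn {p δ : ℝ} (hp : 1 < p) (hδ : 0 < δ) :
    StrictMonoOn (ff p δ) (Ici 0) := by
  apply strictMonoOn_of_deriv_pos (convex_Ici 0)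
  · intro x hx
    exact (contAt_ff (by simp only [mem_Ici] at hx; positivity)).continuousWithinAt
  · intro x hx
    rw [interior_Ici] at hx
    rw [(hasDerivAt_ff (by simp only [mem_Ioi] at hx; linarith)).deriv]
    exact ff'_pos hp hδ (le_of_lt hx)

lemma ff_nonneg {p δ : ℝ} (hδ : 0 < δ) {s : ℝ} (hs : 0 ≤ s) : 0 ≤ ff p δ s := by
  have h0 : (0:ℝ) < δ + s := by linarith
  exact mul_nonneg (Real.rpow_pos_of_pos h0 _).le hs

/-- Surjectivity of `ff` onto `[0,∞)`. -/
lemma ff_surj {p δ : ℝ} (hp : p ∈ Set.Ioc (1:ℝ) 2) (hδ : 0 < δ) {s : ℝ} (hs : 0 ≤ s) :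
    ∃ x ∈ Ici (0:ℝ), ff p δ x = s := by
  obtain ⟨hp1, hp2⟩ := hp
  set b : ℝ := (s + δ ^ (p - 1)) ^ (p - 1)⁻¹ with hb
  have hδp : 0 < δ ^ (p - 1) := Real.rpow_pos_of_pos hδ _
  have hb0 : 0 ≤ b := Real.rpow_nonneg (by positivity) _
  have hδb : 0 < δ + b := by linarith
  have key : s ≤ ff p δ b := by
    have e1 : ff p δ b = (δ + b) ^ (p - 1) - δ * (δ + b) ^ (p - 2) := by
      have : (δ + b) ^ (p - 1) = (δ + b) ^ (p - 2) * (δ + b) := by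
        have h := Real.rpow_add_one hδb.ne' (p - 2)
        have e : p - 2 + 1 = p - 1 := by ring
        rw [e] at h; exact h
      rw [ff, this]; ring
    have e2 : b ^ (p - 1) = s + δ ^ (p - 1) := by
      rw [hb]
      exact Real.rpow_inv_rpow (by positivity) (by intro h; linarith)
    have h1 : b ^ (p - 1) ≤ (δ + b) ^ (p - 1) :=
      Real.rpow_le_rpow hb0 (by linarith) (by linarith)
    have h2 : (δ + b) ^ (p - 2) ≤ δ ^ (p - 2) :=
      Real.rpow_le_rpow_of_nonpos hδ (by linarith) (by linarith)
    have h3 : δ * (δ + b) ^ (p - 2) ≤ δ ^ (p - 1) := by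
      calc δ * (δ + b) ^ (p - 2) ≤ δ * δ ^ (p - 2) := by
            exact mul_le_mul_of_nonneg_left h2 hδ.le
        _ = δ ^ (p - 1) := by
            have e : δ ^ (p - 1) = δ ^ (1 + (p - 2)) := by congr 1; ring
            rw [e, Real.rpow_add hδ, Real.rpow_one]
    rw [e1]
    nlinarith [e2, h1]
  have hcont : ContinuousOn (ff p δ) (Icc 0 b) := by
    intro x hx
    exact (contAt_ff (by have := hx.1; positivity)).continuousWithinAt
  have hmem : s ∈ Icc (ff p δ 0) (ff p δ b) := by
    rw [ff_zero]; exact ⟨hs, key⟩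
  obtain ⟨x, hx, hfx⟩ := intermediate_value_Icc hb0 hcont hmem
  exact ⟨x, hx.1, hfx⟩

/-- The doubling inequality: `2 * ff x ≤ ff (C x)` for `C = 2^(1/(p-1))`. -/
lemma ff_doubling {p δ : ℝ} (hp : p ∈ Set.Ioc (1:ℝ) 2) (hδ : 0 < δ) {x : ℝ} (hx : 0 ≤ x) :
    2 * ff p δ x ≤ ff p δ ((2:ℝ) ^ (p-1)⁻¹ * x) := by
  obtain ⟨hp1, hp2⟩ := hp
  set C : ℝ := (2:ℝ) ^ (p-1)⁻¹ with hC
  have hC1 : 1 ≤ C :=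
    Real.one_le_rpow one_le_two (inv_pos.mpr (by linarith : (0:ℝ) < p - 1)).le
  have hC0 : 0 < C := by linarith
  have hCp : C ^ (p - 1) = 2 :=
    Real.rpow_inv_rpow (by norm_num) (by intro h; linarith [sub_eq_zero.mp h])
  have h0 : (0:ℝ) < δ + x := by linarith
  have h1 : (0:ℝ) < δ + C * x := by nlinarith
  have hle : δ + C * x ≤ C * (δ + x) := by nlinarith
  have h2 : (C * (δ + x)) ^ (p - 2) ≤ (δ + C * x) ^ (p - 2) :=
    Real.rpow_le_rpow_of_nonpos h1 hle (by linarith)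
  have h3 : (C * (δ + x)) ^ (p - 2) = C ^ (p - 2) * (δ + x) ^ (p - 2) :=
    Real.mul_rpow hC0.le h0.le
  have h4 : C ^ (p - 2) * C = C ^ (p - 1) := by
    have h := Real.rpow_add_one hC0.ne' (p - 2)
    have e : p - 2 + 1 = p - 1 := by ring
    rw [e] at h
    rw [h]
  calc 2 * ff p δ x = C ^ (p - 1) * ((δ + x) ^ (p - 2) * x) := by rw [hCp, ff]
    _ = (C ^ (p - 2) * (δ + x) ^ (p - 2)) * (C * x) := by rw [← h4]; ring
    _ ≤ (δ + C * x) ^ (p - 2) * (C * x) := by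
        apply mul_le_mul_of_nonneg_right (h3 ▸ h2)
        positivity
    _ = ff p δ (C * x) := rfl

/-- Tangent line bound: `ff` is concave, so lies below its tangent at `A`, for `t ≥ A`. -/
lemma ff_tangent {p δ : ℝ} (hp : p ∈ Set.Ioc (1:ℝ) 2) (hδ : 0 < δ) {A t : ℝ}
    (hA : 0 ≤ A) (ht : A ≤ t) : ff p δ t ≤ ff' p δ A * (t - A) + ff p δ A := by
  obtain ⟨hp1, hp2⟩ := hp
  have hf'le : ∀ x ∈ Icc A t, ff' p δ x ≤ ff' p δ A := by
    intro x hx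
    obtain ⟨hx1, hx2⟩ := hx
    have hx0 : (0:ℝ) ≤ x := le_trans hA hx1
    have h0A : (0:ℝ) < δ + A := by linarith
    have h0x : (0:ℝ) < δ + x := by linarith
    have key : ∀ y : ℝ, 0 ≤ y → ff' p δ y = (δ + y) ^ (p-2) * ((δ + (p-1)*y)/(δ + y)) := by
      intro y hy
      have h0y : (0:ℝ) < δ + y := by linarith
      have e : (δ + y) ^ (p - 2) = (δ + y) ^ (p - 3) * (δ + y) := by
        have h := Real.rpow_add_one h0y.ne' (p - 3)
        have e' : p - 3 + 1 = p - 2 := by ring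
        rw [e'] at h; exact h
      rw [ff', e]
      field_simp
    rw [key x hx0, key A hA]
    have hr1 : (δ + x) ^ (p-2) ≤ (δ + A) ^ (p-2) :=
      Real.rpow_le_rpow_of_nonpos h0A (by linarith) (by linarith)
    have hr2 : (δ + (p-1)*x)/(δ + x) ≤ (δ + (p-1)*A)/(δ + A) := by
      rw [div_le_div_iff₀ h0x h0A]
      nlinarith [mul_nonneg (sub_nonneg.mpr hx1) (mul_nonneg hδ.le (sub_nonneg.mpr hp2))]
    have hq1 : 0 ≤ (δ + (p-1)*x)/(δ + x) := by
      apply div_nonneg _ h0x.le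
      nlinarith
    have hq2 : 0 ≤ (δ + A) ^ (p-2) := (Real.rpow_pos_of_pos h0A _).le
    exact mul_le_mul hr1 hr2 hq1 hq2
  have hA' : -δ < A := by linarith
  have hderiv : ∀ x ∈ uIcc A t, HasDerivAt (ff p δ) (ff' p δ x) x := by
    intro x hx
    rw [uIcc_of_le ht] at hx
    exact hasDerivAt_ff (by have := hx.1; linarith)
  have hint : IntervalIntegrable (ff' p δ) volume A t := by
    apply ContinuousOn.intervalIntegrable
    rw [uIcc_of_le ht]
    intro x hx
    have h0x : (0:ℝ) < δ + x := by have := hx.1; linarith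
    apply ContinuousWithinAt.mul
    · exact ((((continuous_const.add continuous_id).continuousAt).rpow_const
        (Or.inl h0x.ne')).continuousWithinAt)
    · exact (continuous_const.add (continuous_const.mul continuous_id)).continuousWithinAt
  have hftc : ∫ x in A..t, ff' p δ x = ff p δ t - ff p δ A :=
    intervalIntegral.integral_eq_sub_of_hasDerivAt hderiv hint
  have hmono : ∫ x in A..t, ff' p δ x ≤ ∫ _x in A..t, ff' p δ A :=
    intervalIntegral.integral_mono_on ht hint (intervalIntegrable_const) hf'le
  rw [hftc] at hmono
  rw [intervalIntegral.integral_const, smul_eq_mul] at hmono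
  linarith [hmono]

lemma hasDerivAt_approxA {p δ A : ℝ} (hδ : 0 < δ) (hA : 0 ≤ A) {t : ℝ} (ht : 0 ≤ t) :
    HasDerivAt (approxA (omg p δ) A) (ffB p δ A t) t := by
  have hA' : -δ < A := by linarith
  have ht' : -δ < t := by linarith
  have ed1 : deriv (omg p δ) A = ff p δ A := deriv_omg hδ hA'
  have ed2 : deriv (deriv (omg p δ)) A = ff' p δ A := deriv2_omg hδ hA'
  set c := ff' p δ A with hc
  set gA := ff p δ A with hgA
  set q : ℝ → ℝ := fun x => (1/2) * c * x ^ 2 + (gA - c * A) * x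
    + (omg p δ A - gA * A + (1/2) * c * A ^ 2) with hq
  have hψq : ∀ x, A < x → approxA (omg p δ) A x = q x := by
    intro x hx
    rw [approxA, if_neg (not_le.mpr hx), ed1, ed2]
  have hqA : q A = omg p δ A := by rw [hq]; ring
  have hqd : ∀ x : ℝ, HasDerivAt q (c * x + (gA - c * A)) x := by
    intro x
    have h1 : HasDerivAt (fun y : ℝ => (1/2) * c * y ^ 2) ((1/2) * c * (2 * x ^ 1)) x :=
      HasDerivAt.const_mul ((1/2) * c) (hasDerivAt_pow 2 x)
    have h2 : HasDerivAt (fun y : ℝ => (gA - c * A) * y) ((gA - c * A) * 1) x :=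
      HasDerivAt.const_mul (gA - c * A) (hasDerivAt_id x)
    have h3 := (h1.add h2).add_const (omg p δ A - gA * A + (1/2) * c * A ^ 2)
    have h3' : HasDerivAt q ((1/2) * c * (2 * x ^ 1) + (gA - c * A) * 1) x := h3
    convert h3' using 1
    ring
  rcases lt_trichotomy t A with h | h | h
  · have heq : approxA (omg p δ) A =ᶠ[nhds t] omg p δ := by
      apply Filter.eventuallyEq_of_mem (isOpen_Iio.mem_nhds h)
      intro x hx
      rw [approxA, if_pos (le_of_lt hx)]
    rw [ffB, if_pos (le_of_lt h)]
    exact (hasDerivAt_omg hδ ht').congr_of_eventuallyEq heq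
  · subst h
    rw [ffB, if_pos le_rfl]
    have hIic : HasDerivWithinAt (approxA (omg p δ) t) gA (Iic t) t := by
      apply ((hasDerivAt_omg hδ ht').hasDerivWithinAt).congr
      · intro x hx
        rw [approxA, if_pos (mem_Iic.mp hx)]
      · rw [approxA, if_pos le_rfl]
    have hIci : HasDerivWithinAt (approxA (omg p δ) t) gA (Ici t) t := by
      have h0 : HasDerivAt q gA t := by
        have := hqd t
        convert this using 1
        ring
      apply h0.hasDerivWithinAt.congr
      · intro x hx
        rcases eq_or_lt_of_le (mem_Ici.mp hx) with h' | h'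
        · rw [← h', approxA, if_pos le_rfl, hqA]
        · exact hψq x h'
      · rw [approxA, if_pos le_rfl, hqA]
    have := hIic.union hIci
    rw [Iic_union_Ici] at this
    exact hasDerivWithinAt_univ.mp this
  · have heq : approxA (omg p δ) A =ᶠ[nhds t] q := by
      apply Filter.eventuallyEq_of_mem (isOpen_Ioi.mem_nhds h)
      intro x hx
      exact hψq x hx
    rw [ffB, if_neg (not_le.mpr h)]
    have h0 : HasDerivAt q (c * (t - A) + gA) t := by
      have := hqd t
      convert this using 1
      ring
    exact h0.congr_of_eventuallyEq heq

lemma deriv_approxA {p δ A : ℝ} (hδ : 0 < δ) (hA : 0 ≤ A) {t : ℝ} (ht : 0 ≤ t) :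
    deriv (approxA (omg p δ) A) t = ffB p δ A t := (hasDerivAt_approxA hδ hA ht).deriv

lemma ffB_zero {p δ A : ℝ} (hA : 0 ≤ A) : ffB p δ A 0 = 0 := by
  rw [ffB, if_pos hA, ff_zero]

lemma ff_le_ffB {p δ A : ℝ} (hp : p ∈ Set.Ioc (1:ℝ) 2) (hδ : 0 < δ) (hA : 0 ≤ A)
    {t : ℝ} (ht : 0 ≤ t) : ff p δ t ≤ ffB p δ A t := by
  rw [ffB]
  split_ifs with h
  · exact le_rfl
  · exact ff_tangent hp hδ hA (le_of_not_ge h)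

lemma ffB_strictMonoOn {p δ A : ℝ} (hp : p ∈ Set.Ioc (1:ℝ) 2) (hδ : 0 < δ) (hA : 0 ≤ A) :
    StrictMonoOn (ffB p δ A) (Ici 0) := by
  have hsm := ff_strictMonoOn hp.1 hδ
  have hc := ff'_pos hp.1 hδ hA
  intro x hx y hy hxy
  rw [ffB, ffB]
  rcases le_or_gt y A with hyA | hyA
  · rw [if_pos (le_of_lt (lt_of_lt_of_le hxy hyA)), if_pos hyA]
    exact hsm hx hy hxy
  · rw [if_neg (not_le.mpr hyA)]
    rcases le_or_gt x A with hxA | hxA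
    · rw [if_pos hxA]
      have h1 : ff p δ x ≤ ff p δ A := hsm.monotoneOn hx (mem_Ici.mpr hA) hxA
      nlinarith
    · rw [if_neg (not_le.mpr hxA)]
      nlinarith

lemma ffB_surj {p δ A : ℝ} (hp : p ∈ Set.Ioc (1:ℝ) 2) (hδ : 0 < δ) (hA : 0 ≤ A)
    {s : ℝ} (hs : 0 ≤ s) : ∃ x ∈ Ici (0:ℝ), ffB p δ A x = s := by
  rcases le_or_gt s (ff p δ A) with h | h
  · obtain ⟨x, hx, hfx⟩ := ff_surj hp hδ hs
    refine ⟨x, hx, ?_⟩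
    have hxA : x ≤ A := by
      by_contra hcon
      push_neg at hcon
      have := (ff_strictMonoOn hp.1 hδ) (mem_Ici.mpr hA) hx hcon
      linarith
    rw [ffB, if_pos hxA, hfx]
  · have hc := ff'_pos hp.1 hδ hA
    refine ⟨A + (s - ff p δ A) / ff' p δ A, ?_, ?_⟩
    · have : 0 ≤ (s - ff p δ A) / ff' p δ A := div_nonneg (by linarith) hc.le
      simp only [mem_Ici]
      linarith
    · have hgt : A < A + (s - ff p δ A) / ff' p δ A := by
        have : 0 < (s - ff p δ A) / ff' p δ A := div_pos (by linarith) hc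
        linarith
      rw [ffB, if_neg (not_le.mpr hgt)]
      field_simp
      ring

/-- For `p ∈ (1,2]`, `δ > 0`, `A ≥ 1` and `M ∈ ℕ` with
`(p−1)⁻¹ ≤ 2^M`, the complementary functions satisfy
`(ω^A)*(t) ≤ (p−1)·(Δ₂(ω*))^M·ω*(t)` for all `t ≥ 0`, where `Δ₂(ω*)` is the
(smallest, finite) Δ₂-constant of `ω*`. -/
theorem stmt7 (p δ A : ℝ) (hp : p ∈ Set.Ioc (1:ℝ) 2) (hδ : 0 < δ) (hA : 1 ≤ A)
    (M : ℕ) (hM : (p - 1)⁻¹ ≤ 2 ^ M) :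
    ∃ K : ℝ, SatisfiesDelta2 (conj (omg p δ)) K ∧
      (∀ K' : ℝ, SatisfiesDelta2 (conj (omg p δ)) K' → K ≤ K') ∧
      ∀ t : ℝ, 0 ≤ t →
        conj (approxA (omg p δ) A) t ≤ (p - 1) * K ^ M * conj (omg p δ) t := by
  have hp1 : 1 < p := hp.1
  have hA0 : (0:ℝ) ≤ A := by linarith
  have hsm := ff_strictMonoOn hp1 hδ
  have hsmB := ffB_strictMonoOn hp hδ hA0
  set H : ℝ → ℝ := Function.invFunOn (deriv (omg p δ)) (Set.Ici 0) with hH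
  set HB : ℝ → ℝ := Function.invFunOn (deriv (approxA (omg p δ) A)) (Set.Ici 0) with hHB
  -- basic facts about H
  have hHfact : ∀ s : ℝ, 0 ≤ s → H s ∈ Ici (0:ℝ) ∧ ff p δ (H s) = s := by
    intro s hs
    obtain ⟨x, hx, hfx⟩ := ff_surj hp hδ hs
    have hex : ∃ a ∈ Ici (0:ℝ), deriv (omg p δ) a = s :=
      ⟨x, hx, by rw [deriv_omg hδ (by have := mem_Ici.mp hx; linarith)]; exact hfx⟩
    have h1 := Function.invFunOn_mem hex
    have h2 := Function.invFunOn_eq hex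
    refine ⟨h1, ?_⟩
    rw [← deriv_omg hδ (by have := mem_Ici.mp h1; linarith)]
    exact h2
  have hHBfact : ∀ s : ℝ, 0 ≤ s → HB s ∈ Ici (0:ℝ) ∧ ffB p δ A (HB s) = s := by
    intro s hs
    obtain ⟨x, hx, hfx⟩ := ffB_surj hp hδ hA0 hs
    have hex : ∃ a ∈ Ici (0:ℝ), deriv (approxA (omg p δ) A) a = s :=
      ⟨x, hx, by rw [deriv_approxA hδ hA0 (mem_Ici.mp hx)]; exact hfx⟩
    have h1 := Function.invFunOn_mem hex
    have h2 := Function.invFunOn_eq hex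
    refine ⟨h1, ?_⟩
    rw [← deriv_approxA hδ hA0 (mem_Ici.mp h1)]
    exact h2
  have hHnonneg : ∀ s : ℝ, 0 ≤ s → 0 ≤ H s := fun s hs => (hHfact s hs).1
  have hHmono : ∀ s₁ s₂ : ℝ, 0 ≤ s₁ → s₁ ≤ s₂ → H s₁ ≤ H s₂ := by
    intro s₁ s₂ h1 h12
    have f1 := hHfact s₁ h1
    have f2 := hHfact s₂ (le_trans h1 h12)
    rw [← hsm.le_iff_le f1.1 f2.1] at *
    rw [f1.2, f2.2]
    exact h12
  have hHBmono : ∀ s₁ s₂ : ℝ, 0 ≤ s₁ → s₁ ≤ s₂ → HB s₁ ≤ HB s₂ := by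
    intro s₁ s₂ h1 h12
    have f1 := hHBfact s₁ h1
    have f2 := hHBfact s₂ (le_trans h1 h12)
    rw [← hsmB.le_iff_le f1.1 f2.1] at *
    rw [f1.2, f2.2]
    exact h12
  have hHB_le_H : ∀ s : ℝ, 0 ≤ s → HB s ≤ H s := by
    intro s hs
    have f1 := hHBfact s hs
    have f2 := hHfact s hs
    rw [← hsm.le_iff_le f1.1 f2.1, f2.2]
    calc ff p δ (HB s) ≤ ffB p δ A (HB s) :=
          ff_le_ffB hp hδ hA0 (mem_Ici.mp f1.1)
      _ = s := f1.2
  -- integrability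
  have hHint : ∀ t : ℝ, 0 ≤ t → IntervalIntegrable H volume 0 t := by
    intro t ht
    apply MonotoneOn.intervalIntegrable
    rw [uIcc_of_le ht]
    intro a ha b hb hab
    exact hHmono a b ha.1 hab
  have hHBint : ∀ t : ℝ, 0 ≤ t → IntervalIntegrable HB volume 0 t := by
    intro t ht
    apply MonotoneOn.intervalIntegrable
    rw [uIcc_of_le ht]
    intro a ha b hb hab
    exact hHBmono a b ha.1 hab
  have hconj : ∀ t : ℝ, conj (omg p δ) t = ∫ s in (0:ℝ)..t, H s := fun t => rfl
  have hconjB : ∀ t : ℝ, conj (approxA (omg p δ) A) t = ∫ s in (0:ℝ)..t, HB s := fun t => rfl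
  have hconj_nonneg : ∀ t : ℝ, 0 ≤ t → 0 ≤ conj (omg p δ) t := by
    intro t ht
    rw [hconj]
    exact intervalIntegral.integral_nonneg ht (fun u hu => hHnonneg u hu.1)
  -- the Δ₂ inequality with constant K₀
  set C : ℝ := (2:ℝ) ^ (p-1)⁻¹ with hCdef
  have hC1 : 1 ≤ C :=
    Real.one_le_rpow one_le_two (inv_pos.mpr (by linarith : (0:ℝ) < p - 1)).le
  have hK₀ : SatisfiesDelta2 (conj (omg p δ)) (2 * C) := by
    constructor
    · linarith
    · intro t ht
      have hdb : ∀ u : ℝ, 0 ≤ u → H (2 * u) ≤ C * H u := by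
        intro u hu
        have f1 := hHfact (2*u) (by linarith)
        have f2 := hHfact u hu
        have hCH : C * H u ∈ Ici (0:ℝ) := by
          have := hHnonneg u hu
          simp only [mem_Ici]
          nlinarith
        rw [← hsm.le_iff_le f1.1 hCH, f1.2]
        calc 2 * u = 2 * ff p δ (H u) := by rw [f2.2]
          _ ≤ ff p δ (C * H u) := ff_doubling hp hδ (hHnonneg u hu)
      have step1 : conj (omg p δ) (2*t) = 2 * ∫ u in (0:ℝ)..t, H (2*u) := by
        rw [hconj]
        have := intervalIntegral.integral_comp_mul_left H (show (2:ℝ) ≠ 0 by norm_num)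
          (a := 0) (b := t)
        rw [mul_zero] at this
        rw [this, smul_eq_mul]
        ring
      have step2 : (∫ u in (0:ℝ)..t, H (2*u)) ≤ ∫ u in (0:ℝ)..t, C * H u := by
        apply intervalIntegral.integral_mono_on ht
        · have h2t := hHint (2*t) (by linarith)
          -- u ↦ H (2u) integrable on [0,t]
          apply MonotoneOn.intervalIntegrable
          rw [uIcc_of_le ht]
          intro a ha b hb hab
          exact hHmono (2*a) (2*b) (by linarith [ha.1]) (by linarith)
        · exact (hHint t ht).const_mul C
        · intro x hx
          exact hdb x hx.1
      rw [step1]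
      calc 2 * ∫ u in (0:ℝ)..t, H (2*u) ≤ 2 * ∫ u in (0:ℝ)..t, C * H u := by linarith
        _ = 2 * C * conj (omg p δ) t := by
            rw [intervalIntegral.integral_const_mul, hconj]; ring
  -- the optimal Δ₂ constant
  set S : Set ℝ := {K | SatisfiesDelta2 (conj (omg p δ)) K} with hS
  have hne : S.Nonempty := ⟨2 * C, hK₀⟩
  have hbdd : BddBelow S := ⟨2, fun K' hK' => hK'.1⟩
  set K : ℝ := sInf S with hKdef
  have hK2 : 2 ≤ K := le_csInf hne (fun K' hK' => hK'.1)
  have hKS : SatisfiesDelta2 (conj (omg p δ)) K := by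
    refine ⟨hK2, ?_⟩
    intro t ht
    rcases eq_or_lt_of_le (hconj_nonneg t ht) with hc | hc
    · have h0 := hK₀.2 t ht
      rw [← hc] at h0 ⊢
      rw [mul_zero] at h0 ⊢
      exact h0
    · have hKg : conj (omg p δ) (2*t) / conj (omg p δ) t ≤ K := by
        apply le_csInf hne
        intro K' hK'
        rw [div_le_iff₀ hc]
        exact hK'.2 t ht
      rw [div_le_iff₀ hc] at hKg
      exact hKg
  refine ⟨K, hKS, fun K' h => csInf_le hbdd h, ?_⟩
  intro t ht
  have h1 : conj (approxA (omg p δ) A) t ≤ conj (omg p δ) t := by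
    rw [hconj, hconjB]
    apply intervalIntegral.integral_mono_on ht (hHBint t ht) (hHint t ht)
    intro x hx
    exact hHB_le_H x hx.1
  have h2 : (1:ℝ) ≤ (p - 1) * K ^ M := by
    have hpow : (2:ℝ) ^ M ≤ K ^ M := pow_le_pow_left₀ (by norm_num) hK2 M
    have hp0 : (0:ℝ) < p - 1 := by linarith
    have : (p - 1) * (p - 1)⁻¹ ≤ (p - 1) * K ^ M := by
      apply mul_le_mul_of_nonneg_left _ hp0.le
      linarith
    rwa [mul_inv_cancel₀ hp0.ne'] at this
  calc conj (approxA (omg p δ) A) t ≤ conj (omg p δ) t := h1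
    _ ≤ (p - 1) * K ^ M * conj (omg p δ) t :=
        le_mul_of_one_le_left (hconj_nonneg t ht) h2

end
end
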